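/- Let U(θ,α,β) be as in the EWL scheme, |Ψ⟩ = (|00⟩+i|11⟩)/√2, and |Ψ01⟩ = (I⊗C1)|Ψ⟩ where C1 = [[0,i],[i,0]]. Then the maximum over θ ∈ [0,π], α,β ∈ [0,2π) of |⟨Ψ01|U(θ,α,β)⊗U(θ,α,β)|Ψ⟩|² equals 1/2. -/

import Mathlib

/-- The maximally entangled state |Ψ⟩ = (|00⟩ + i|11⟩)/√2 as amplitudes. -/
noncomputable def PsiState : Fin 2 → Fin 2 → ℂ := fun k l =>
  if k = 0 ∧ l = 0 then ((Real.sqrt 2)⁻¹ : ℝ)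
  else if k = 1 ∧ l = 1 then Complex.I * ((Real.sqrt 2)⁻¹ : ℝ)
  else 0

/-- The EWL strategy U(θ,α,β). -/
noncomputable def EWLU (θ α β : ℝ) : Matrix (Fin 2) (Fin 2) ℂ :=
  !![Complex.exp (Complex.I * α) * Real.cos (θ/2),
     Complex.I * Complex.exp (Complex.I * β) * Real.sin (θ/2);
     Complex.I * Complex.exp (-(Complex.I * β)) * Real.sin (θ/2),
     Complex.exp (-(Complex.I * α)) * Real.cos (θ/2)]

/-- Action of A ⊗ B on a two-qubit state. -/
noncomputable def tensorApply (A B : Matrix (Fin 2) (Fin 2) ℂ)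
    (ψ : Fin 2 → Fin 2 → ℂ) : Fin 2 → Fin 2 → ℂ :=
  fun k l => ∑ k' : Fin 2, ∑ l' : Fin 2, A k k' * B l l' * ψ k' l'

/-- Inner product ⟨φ|ψ⟩ on ℂ²⊗ℂ². -/
noncomputable def inner2 (φ ψ : Fin 2 → Fin 2 → ℂ) : ℂ :=
  ∑ k : Fin 2, ∑ l : Fin 2, (starRingEnd ℂ) (φ k l) * ψ k l

/-- C₀ = I, C₁ = [[0,i],[i,0]]. -/
noncomputable def Cop : Fin 2 → Matrix (Fin 2) (Fin 2) ℂ := fun k =>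
  if k = 0 then 1 else !![0, Complex.I; Complex.I, 0]

/-- The basis states |Ψ_kl⟩ = (C_k ⊗ C_l)|Ψ⟩. -/
noncomputable def PsiBasis (k l : Fin 2) : Fin 2 → Fin 2 → ℂ :=
  tensorApply (Cop k) (Cop l) PsiState

lemma key (θ α β : ℝ) :
    inner2 (PsiBasis 0 1) (tensorApply (EWLU θ α β) (EWLU θ α β) PsiState)
      = (((Real.cos (α-β) + Real.sin (α-β)) * Real.cos (θ/2) * Real.sin (θ/2) : ℝ) : ℂ) := by
  have h2 : (Real.sqrt 2) * (Real.sqrt 2) = 2 := Real.mul_self_sqrt (by norm_num)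
  simp only [inner2, PsiBasis, tensorApply, Cop, PsiState, EWLU, Fin.sum_univ_two,
    Matrix.one_apply, Matrix.cons_val', Matrix.cons_val_zero, Matrix.cons_val_one,
    Matrix.head_cons, Matrix.head_fin_const, Matrix.empty_val', Matrix.cons_val_fin_one]
  norm_num
  rw [mul_comm Complex.I (α:ℂ), mul_comm Complex.I (β:ℂ)]
  rw [show -((α:ℂ)*Complex.I) = (-α:ℂ)*Complex.I by ring,
      show -((β:ℂ)*Complex.I) = (-β:ℂ)*Complex.I by ring]
  rw [Complex.exp_mul_I, Complex.exp_mul_I, Complex.exp_mul_I, Complex.exp_mul_I]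
  push_cast [Real.cos_sub, Real.sin_sub, Complex.cos_neg, Complex.sin_neg,
    ← Complex.ofReal_cos, ← Complex.ofReal_sin]
  have hs : Real.sqrt 2 ≠ 0 := by positivity
  field_simp
  ring_nf
  have h2c : ((Real.sqrt 2 : ℝ) : ℂ)^2 = 2 := by
    norm_cast
    rw [sq]; exact h2
  have h4 : ((Real.sqrt 2 : ℝ) : ℂ)^4 = 4 := by
    rw [show (4:ℕ) = 2*2 from rfl, pow_mul, h2c]; norm_num
  have hI2 : Complex.I^2 = -1 := Complex.I_sq
  have hI3 : Complex.I^3 = -Complex.I := by rw [pow_succ, hI2]; ring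
  have hI4 : Complex.I^4 = 1 := by
    rw [pow_succ, hI3]
    simp [Complex.I_mul_I]
  have hI5 : Complex.I^5 = Complex.I := by rw [pow_succ, hI4]; ring
  rw [Complex.cos_sub, Complex.sin_sub]
  simp only [h2c, h4, hI2, hI3, hI4, hI5, show Complex.I^6 = -1 by rw [pow_succ, hI5, Complex.I_mul_I],
    Complex.ofReal_cos, Complex.ofReal_sin]
  ring

theorem stmt_11 :
    IsGreatest {x : ℝ | ∃ θ α β : ℝ, θ ∈ Set.Icc 0 Real.pi ∧
        α ∈ Set.Ico 0 (2 * Real.pi) ∧ β ∈ Set.Ico 0 (2 * Real.pi) ∧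
        x = ‖inner2 (PsiBasis 0 1)
              (tensorApply (EWLU θ α β) (EWLU θ α β) PsiState)‖ ^ 2}
      (1/2) := by
  have hπ := Real.pi_pos
  constructor
  · refine ⟨Real.pi/2, Real.pi/4, 0, ⟨by linarith, by linarith⟩,
      ⟨by linarith, by linarith⟩, ⟨le_refl 0, by linarith⟩, ?_⟩
    rw [key, Complex.norm_real, Real.norm_eq_abs, sq_abs, show Real.pi/2/2 = Real.pi/4 by ring]
    norm_num [Real.cos_pi_div_four, Real.sin_pi_div_four]
    have h2 : Real.sqrt 2 ^ 2 = 2 := Real.sq_sqrt (by norm_num)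
    linear_combination (-(Real.sqrt 2^4 + 2*Real.sqrt 2^2 + 4)/16) * h2
  · rintro x ⟨θ, α, β, hθ, hα, hβ, rfl⟩
    rw [key, Complex.norm_real, Real.norm_eq_abs, sq_abs]
    have h1 := Real.sin_sq_add_cos_sq (α - β)
    have h2 := Real.sin_sq_add_cos_sq (θ / 2)
    nlinarith [sq_nonneg (Real.cos (α-β) - Real.sin (α-β)),
      sq_nonneg (Real.cos (θ/2)^2 - Real.sin (θ/2)^2),
      sq_nonneg (Real.cos (θ/2) * Real.sin (θ/2)),
      sq_nonneg ((Real.cos (α-β) + Real.sin (α-β)) * Real.cos (θ/2) * Real.sin (θ/2))]
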